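/- Let R be an O-submodule of Oⁿ with dim_k(Oⁿ/R) finite. Then there exist unique monic polynomials P_1, …, P_n ∈ O and unique polynomials R_{ij} ∈ O for 1 ≤ j < i ≤ n with deg(R_{ij}) < deg(P_j), such that R is generated as an O-module by the n vectors v_i = P_i·e_i + Σ_{j<i} R_{ij}·e_j (i = 1, …, n). -/

import Mathlib

open Polynomial Submodule Set

section Aux

variable {k : Type*} [Field k] {n : ℕ}

/-- The submodule of vectors supported in coordinates `< m`. -/
noncomputable def lowSupp (k : Type*) [Field k] (n m : ℕ) :
    Submodule (Polynomial k) (Fin n → Polynomial k) where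
  carrier := {x | ∀ l : Fin n, m ≤ (l : ℕ) → x l = 0}
  add_mem' := by intro a b ha hb l hl; simp [Pi.add_apply, ha l hl, hb l hl]
  zero_mem' := fun l hl => rfl
  smul_mem' := by intro c x hx l hl; simp [Pi.smul_apply, hx l hl]

lemma mem_lowSupp {m : ℕ} {x : Fin n → Polynomial k} :
    x ∈ lowSupp k n m ↔ ∀ l : Fin n, m ≤ (l : ℕ) → x l = 0 := Iff.rfl

variable (P : Fin n → Polynomial k) (v : Fin n → Fin n → Polynomial k)

lemma aux_coeff_zero (hmonic : ∀ i, (P i).Monic) (hdiag : ∀ i, v i i = P i)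
    (hupper : ∀ i l, i < l → v i l = 0) (c : Fin n → Polynomial k) (m : ℕ)
    (hdeg : ∀ l : Fin n, m ≤ (l : ℕ) → ((∑ j, c j • v j) l).degree < (P l).degree) :
    ∀ l : Fin n, m ≤ (l : ℕ) → c l = 0 := by
  have key : ∀ d : ℕ, ∀ l : Fin n, m ≤ (l : ℕ) → n - (l : ℕ) ≤ d → c l = 0 := by
    intro d
    induction d with
    | zero => intro l _ hd; exact absurd hd (by have := l.isLt; omega)
    | succ d ih =>
      intro l hml hd
      have hsum : (∑ j, c j • v j) l = c l * P l := by
        rw [Finset.sum_apply]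
        rw [Finset.sum_eq_single l]
        · simp [Pi.smul_apply, smul_eq_mul, hdiag l]
        · intro b _ hbl
          rcases lt_or_gt_of_ne hbl with hb | hb
          · simp [Pi.smul_apply, smul_eq_mul, hupper b l hb]
          · have : c b = 0 := ih b (by have := l.isLt; omega)
              (by have := b.isLt; have : (l : ℕ) < (b : ℕ) := hb; omega)
            simp [this]
        · intro h; exact absurd (Finset.mem_univ l) h
      have hlt := hdeg l hml
      rw [hsum] at hlt
      by_contra hc
      have h0 : (0 : WithBot ℕ) ≤ (c l).degree := zero_le_degree_iff.mpr hc
      have : (P l).degree ≤ (c l * P l).degree := by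
        rw [degree_mul]
        exact le_add_of_nonneg_left h0
      exact absurd (lt_of_le_of_lt this hlt) (lt_irrefl _)
  intro l hml
  exact key n l hml (by omega)

lemma aux_dvd (hmonic : ∀ i, (P i).Monic) (hdiag : ∀ i, v i i = P i)
    (hupper : ∀ i l, i < l → v i l = 0) (x : Fin n → Polynomial k)
    (hx : x ∈ span (Polynomial k) (Set.range v)) (i : Fin n)
    (hzero : ∀ l, i < l → x l = 0) : P i ∣ x i := by
  obtain ⟨c, hc⟩ := (mem_span_range_iff_exists_fun (Polynomial k)).mp hx
  have hcz : ∀ l : Fin n, (i : ℕ) + 1 ≤ (l : ℕ) → c l = 0 := by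
    apply aux_coeff_zero P v hmonic hdiag hupper
    intro l hl
    have : x l = 0 := hzero l (by exact Fin.lt_def.mpr (by omega))
    rw [hc, this, degree_zero]
    exact (bot_lt_iff_ne_bot).mpr (by simp [degree_eq_bot, (hmonic l).ne_zero])
  have hsum : x i = c i * P i := by
    rw [← hc, Finset.sum_apply, Finset.sum_eq_single i]
    · simp [Pi.smul_apply, smul_eq_mul, hdiag i]
    · intro b _ hbi
      rcases lt_or_gt_of_ne hbi with hb | hb
      · simp [Pi.smul_apply, smul_eq_mul, hupper b i hb]
      · have : c b = 0 := hcz b (by have : (i : ℕ) < (b : ℕ) := hb; omega)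
        simp [this]
    · intro h; exact absurd (Finset.mem_univ i) h
  exact ⟨c i, by rw [hsum, mul_comm]⟩

lemma aux_span_low (hupper : ∀ i l, i < l → v i l = 0) (m : ℕ) :
    span (Polynomial k) (v '' {j : Fin n | (j : ℕ) < m}) ≤ lowSupp k n m := by
  rw [span_le]
  rintro _ ⟨j, hj, rfl⟩ l hl
  exact hupper j l (Fin.lt_def.mpr (by simp only [mem_setOf_eq] at hj; omega))

lemma aux_reduce (hmonic : ∀ i, (P i).Monic) (hdiag : ∀ i, v i i = P i)
    (hupper : ∀ i l, i < l → v i l = 0) (m : ℕ) :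
    ∀ x : Fin n → Polynomial k,
      (∀ l : Fin n, m ≤ (l : ℕ) → (x l).degree < (P l).degree) →
      ∃ y ∈ span (Polynomial k) (v '' {j : Fin n | (j : ℕ) < m}),
        ∀ l : Fin n, ((x - y) l).degree < (P l).degree := by
  induction m with
  | zero =>
    intro x hx
    exact ⟨0, zero_mem _, by simpa using fun l => hx l (Nat.zero_le _)⟩
  | succ m ih =>
    intro x hx
    by_cases hm : m < n
    · set j : Fin n := ⟨m, hm⟩ with hj
      set q := x j /ₘ P j with hq
      have h1 : ∀ l : Fin n, m ≤ (l : ℕ) → ((x - q • v j) l).degree < (P l).degree := by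
        intro l hl
        rcases eq_or_lt_of_le hl with heq | hlt
        · have hlj : l = j := by apply Fin.ext; simp [hj, ← heq]
          have hxx : (x - q • v j) j = x j %ₘ P j := by
            simp only [Pi.sub_apply, Pi.smul_apply, smul_eq_mul, hdiag j]
            rw [hq, modByMonic_eq_sub_mul_div _ (P j)]
            ring
          rw [hlj, hxx]
          exact degree_modByMonic_lt _ (hmonic j)
        · have : v j l = 0 := hupper j l (Fin.lt_def.mpr (by simp [hj]; omega))
          simp only [Pi.sub_apply, Pi.smul_apply, smul_eq_mul, this, mul_zero, sub_zero]
          exact hx l (by omega)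
      obtain ⟨y, hy, hy2⟩ := ih (x - q • v j) h1
      refine ⟨q • v j + y, ?_, ?_⟩
      · apply add_mem
        · exact smul_mem _ _ (subset_span ⟨j, by simp [hj], rfl⟩)
        · exact span_mono (Set.image_mono (f := v)
            (fun a ha => by simp only [mem_setOf_eq] at ha ⊢; omega)) hy
      · intro l
        have : x - (q • v j + y) = (x - q • v j) - y := by ring
        rw [this]
        exact hy2 l
    · obtain ⟨y, hy, hy2⟩ := ih x (fun l hl => absurd hl (by have := l.isLt; omega))
      exact ⟨y, span_mono (Set.image_mono (f := v)
        (fun a ha => by simp only [mem_setOf_eq] at ha ⊢; omega)) hy, hy2⟩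

lemma exists_nonzero (R : Submodule (Polynomial k) (Fin n → Polynomial k))
    (hfin : Module.Finite k ((Fin n → Polynomial k) ⧸ R)) (i : Fin n) :
    ∃ x ∈ R, (∀ l, i < l → x l = 0) ∧ x i ≠ 0 := by
  haveI := hfin
  set S := R ⊔ lowSupp k n i with hS
  have hRS : R ≤ S := le_sup_left
  haveI : Module.Finite k ((Fin n → Polynomial k) ⧸ S) := by
    apply Module.Finite.of_surjective
      ((Submodule.mapQ R S LinearMap.id hRS).restrictScalars k)
    intro y
    obtain ⟨x, rfl⟩ := S.mkQ_surjective y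
    exact ⟨R.mkQ x, by simp [Submodule.mapQ_apply]⟩
  set φ : Polynomial k →ₗ[k] ((Fin n → Polynomial k) ⧸ S) :=
    ((S.mkQ.comp (LinearMap.toSpanSingleton (Polynomial k) (Fin n → Polynomial k)
      ((Pi.single i 1 : Fin n → Polynomial k)))).restrictScalars k) with hφ
  have hninj : ¬ Function.Injective φ := by
    intro hinj
    exact Polynomial.not_finite (Module.Finite.of_injective φ hinj)
  rw [Function.not_injective_iff] at hninj
  obtain ⟨a, b, hab, hne⟩ := hninj
  have hq : (a - b) • ((Pi.single i 1 : Fin n → Polynomial k) : Fin n → Polynomial k) ∈ S := by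
    have h0 : φ (a - b) = 0 := by rw [map_sub, hab, sub_self]
    exact (Submodule.Quotient.mk_eq_zero S).mp h0
  rw [hS, Submodule.mem_sup] at hq
  obtain ⟨r, hr, w, hw, hrw⟩ := hq
  refine ⟨r, hr, ?_, ?_⟩
  · intro l hl
    have h1 : r l + w l = ((a - b) • ((Pi.single i 1 : Fin n → Polynomial k) : Fin n → Polynomial k)) l := by
      rw [← hrw]; rfl
    have h2 : ((a - b) • ((Pi.single i 1 : Fin n → Polynomial k) : Fin n → Polynomial k)) l = 0 := by
      simp [Pi.smul_apply, Pi.single_eq_of_ne (ne_of_gt hl)]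
    have h3 : w l = 0 := hw l (le_of_lt hl)
    rw [h2, h3, add_zero] at h1
    exact h1
  · have h1 : r i + w i = ((a - b) • ((Pi.single i 1 : Fin n → Polynomial k) : Fin n → Polynomial k)) i := by
      rw [← hrw]; rfl
    have h2 : ((a - b) • ((Pi.single i 1 : Fin n → Polynomial k) : Fin n → Polynomial k)) i = a - b := by
      simp [Pi.smul_apply]
    have h3 : w i = 0 := hw i le_rfl
    rw [h2, h3, add_zero] at h1
    rw [h1]
    exact sub_ne_zero.mpr hne

lemma exists_pivot (R : Submodule (Polynomial k) (Fin n → Polynomial k))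
    (hfin : Module.Finite k ((Fin n → Polynomial k) ⧸ R)) (i : Fin n) :
    ∃ P₀ : Polynomial k, ∃ x, x ∈ R ∧ P₀.Monic ∧ (∀ l, i < l → x l = 0) ∧ x i = P₀ ∧
      (∀ y ∈ R, (∀ l, i < l → y l = 0) → P₀ ∣ y i) := by
  set I : Ideal (Polynomial k) :=
    Submodule.map (LinearMap.proj i) (R ⊓ lowSupp k n ((i : ℕ) + 1)) with hI
  have hmemI : ∀ q : Polynomial k, q ∈ I ↔ ∃ x ∈ R, (∀ l, i < l → x l = 0) ∧ x i = q := by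
    intro q
    constructor
    · rintro ⟨x, ⟨hxR, hxlow⟩, rfl⟩
      exact ⟨x, hxR, fun l hl => hxlow l (by omega), rfl⟩
    · rintro ⟨x, hxR, hxlow, rfl⟩
      exact ⟨x, ⟨hxR, fun l hl => hxlow l (Fin.lt_def.mpr (by omega))⟩, rfl⟩
  have hIne : I ≠ ⊥ := by
    obtain ⟨x, hxR, hxlow, hxne⟩ := exists_nonzero R hfin i
    intro hbot
    have : x i ∈ I := (hmemI (x i)).mpr ⟨x, hxR, hxlow, rfl⟩
    rw [hbot, Submodule.mem_bot] at this
    exact hxne this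
  haveI : (I : Ideal (Polynomial k)).IsPrincipal := IsPrincipalIdealRing.principal I
  set g := Submodule.IsPrincipal.generator I with hg
  have hgI : g ∈ I := Submodule.IsPrincipal.generator_mem I
  have hgne : g ≠ 0 := by
    intro h
    apply hIne
    rw [← Submodule.IsPrincipal.span_singleton_generator I, ← hg, h]
    simp
  set P₀ := g * C (g.leadingCoeff)⁻¹ with hP₀
  have hmon : P₀.Monic := monic_mul_leadingCoeff_inv hgne
  have hP₀I : P₀ ∈ I := by
    rw [hP₀, mul_comm]
    exact Ideal.mul_mem_left I _ hgI
  have hgdvd : P₀ ∣ g := by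
    refine ⟨C g.leadingCoeff, ?_⟩
    rw [hP₀, mul_assoc, ← C_mul, inv_mul_cancel₀ (leadingCoeff_ne_zero.mpr hgne)]
    simp
  obtain ⟨x, hxR, hxlow, hxi⟩ := (hmemI P₀).mp hP₀I
  exact ⟨P₀, x, hxR, hmon, hxlow, hxi, fun y hyR hylow => by
    have : y i ∈ I := (hmemI (y i)).mpr ⟨y, hyR, hylow, rfl⟩
    rw [← Submodule.IsPrincipal.span_singleton_generator I, ← hg,
      Ideal.submodule_span_eq, Ideal.mem_span_singleton] at this
    exact dvd_trans hgdvd this⟩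

end Aux

theorem stmt7 (k : Type*) [Field k] (n : ℕ)
    (R : Submodule (Polynomial k) (Fin n → Polynomial k))
    (hfin : Module.Finite k ((Fin n → Polynomial k) ⧸ R)) :
    ∃! PR : (Fin n → Polynomial k) × (Fin n → Fin n → Polynomial k),
      (∀ i : Fin n, (PR.1 i).Monic) ∧
      (∀ i j : Fin n, j < i → (PR.2 i j).degree < (PR.1 j).degree) ∧
      (∀ i j : Fin n, ¬ j < i → PR.2 i j = 0) ∧
      R = Submodule.span (Polynomial k)
        (Set.range fun i : Fin n => fun l : Fin n =>
          if l = i then PR.1 i else PR.2 i l) := by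
  classical
  choose P v hvR hmon hvup hvdiag hdvd using fun i => exists_pivot R hfin i
  -- reduce v to echelon form w
  have h2 : ∀ i : Fin n, ∃ y ∈ span (Polynomial k) (v '' {j : Fin n | (j : ℕ) < (i : ℕ)}),
      ∀ l : Fin n, ((v i - P i • (Pi.single i 1 : Fin n → Polynomial k) - y) l).degree < (P l).degree := by
    intro i
    apply aux_reduce P v hmon hvdiag hvup (i : ℕ)
    intro l hl
    have hz : (v i - P i • (Pi.single i 1 : Fin n → Polynomial k)) l = 0 := by
      rcases eq_or_lt_of_le hl with heq | hlt
      · have hli : l = i := Fin.ext heq.symm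
        rw [hli]
        simp [Pi.sub_apply, Pi.smul_apply, hvdiag i]
      · have e1 : v i l = 0 := hvup i l (Fin.lt_def.mpr hlt)
        have e2 : (Pi.single i 1 : Fin n → Polynomial k) l = 0 :=
          Pi.single_eq_of_ne (ne_of_gt (Fin.lt_def.mpr hlt)) 1
        simp [Pi.sub_apply, Pi.smul_apply, e1, e2]
    rw [hz, degree_zero]
    exact bot_lt_iff_ne_bot.mpr (by simp [degree_eq_bot, (hmon l).ne_zero])
  choose y hymem hydeg using h2
  set w : Fin n → (Fin n → Polynomial k) := fun i => v i - y i with hw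
  have hylow : ∀ (i l : Fin n), (i : ℕ) ≤ (l : ℕ) → y i l = 0 := by
    intro i l hl
    exact mem_lowSupp.mp (aux_span_low v hvup (i : ℕ) (hymem i)) l hl
  have hwdiag : ∀ i, w i i = P i := by
    intro i
    simp [hw, Pi.sub_apply, hvdiag i, hylow i i le_rfl]
  have hwup : ∀ i l, i < l → w i l = 0 := by
    intro i l hl
    simp [hw, Pi.sub_apply, hvup i l hl, hylow i l (le_of_lt hl)]
  have hsubR : ∀ i : Fin n, y i ∈ R := by
    intro i
    have hle : span (Polynomial k) (v '' {j : Fin n | (j : ℕ) < (i : ℕ)}) ≤ R := by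
      rw [span_le]; rintro _ ⟨j, _, rfl⟩; exact hvR j
    exact hle (hymem i)
  have hwR : ∀ i, w i ∈ R := fun i => sub_mem (hvR i) (hsubR i)
  have hwdeg : ∀ i l, l ≠ i → (w i l).degree < (P l).degree := by
    intro i l hl
    have h0 := hydeg i l
    have he : (v i - P i • (Pi.single i 1 : Fin n → Polynomial k) - y i) l = w i l := by
      simp [hw, Pi.sub_apply, Pi.smul_apply, Pi.single_eq_of_ne hl]
    rwa [he] at h0
  -- R = span of the w's
  have hRle : ∀ m : ℕ, ∀ x ∈ R, (∀ l : Fin n, m ≤ (l : ℕ) → x l = 0) →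
      x ∈ span (Polynomial k) (Set.range w) := by
    intro m
    induction m with
    | zero =>
      intro x _ h0
      have : x = 0 := funext fun l => h0 l (Nat.zero_le _)
      rw [this]; exact zero_mem _
    | succ m ih =>
      intro x hxR hx
      by_cases hm : m < n
      · set j : Fin n := ⟨m, hm⟩ with hj
        obtain ⟨c, hc⟩ := hdvd j x hxR
          (fun l hl => hx l (by rw [Fin.lt_def] at hl; simp only [hj] at hl; omega))
        have hsub : x - c • w j ∈ R := sub_mem hxR (Submodule.smul_mem _ _ (hwR j))
        have hlow : ∀ l : Fin n, m ≤ (l : ℕ) → (x - c • w j) l = 0 := by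
          intro l hl
          rcases eq_or_lt_of_le hl with heq | hlt
          · have hlj : l = j := by apply Fin.ext; simp [hj, ← heq]
            rw [hlj]
            simp only [Pi.sub_apply, Pi.smul_apply, smul_eq_mul, hwdiag j]
            rw [hc]
            ring
          · have e1 : x l = 0 := hx l (by omega)
            have e2 : w j l = 0 := hwup j l (Fin.lt_def.mpr (by simp [hj]; omega))
            simp [Pi.sub_apply, Pi.smul_apply, e1, e2]
        have hmem := ih _ hsub hlow
        have hxeq : x = (x - c • w j) + c • w j := by ring
        rw [hxeq]
        exact add_mem hmem (Submodule.smul_mem _ _ (subset_span ⟨j, rfl⟩))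
      · exact ih x hxR (fun l hl => absurd hl (by have := l.isLt; omega))
  have hspan : R = span (Polynomial k) (Set.range w) := by
    apply le_antisymm
    · intro x hx
      exact hRle n x hx (fun l hl => absurd hl (by have := l.isLt; omega))
    · rw [span_le]; rintro _ ⟨i, rfl⟩; exact hwR i
  refine ⟨⟨P, fun i j => if j < i then w i j else 0⟩, ⟨hmon, ?_, ?_, ?_⟩, ?_⟩
  · intro i j hj
    show (if j < i then w i j else 0).degree < (P j).degree
    rw [if_pos hj]
    exact hwdeg i j (ne_of_lt hj)
  · intro i j hj
    show (if j < i then w i j else 0) = 0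
    rw [if_neg hj]
  · have hfeq : (fun i : Fin n => fun l : Fin n =>
        if l = i then P i else if l < i then w i l else 0) = w := by
      funext i l
      by_cases h : l = i
      · rw [if_pos h, h, hwdiag i]
      · rw [if_neg h]
        by_cases h2 : l < i
        · rw [if_pos h2]
        · rw [if_neg h2]
          exact (hwup i l (lt_of_le_of_ne (not_lt.mp h2) (Ne.symm h))).symm
    rw [hfeq]
    exact hspan
  -- uniqueness
  rintro ⟨P', Rm'⟩ ⟨u1, u2, u3, u4⟩
  dsimp only at u1 u2 u3 u4
  set v' : Fin n → Fin n → Polynomial k :=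
    fun i => fun l : Fin n => if l = i then P' i else Rm' i l with hv'
  have hdiag' : ∀ i, v' i i = P' i := fun i => if_pos rfl
  have hup' : ∀ i l, i < l → v' i l = 0 := by
    intro i l hl
    show (if l = i then P' i else Rm' i l) = 0
    rw [if_neg (ne_of_gt hl)]
    exact u3 i l (lt_asymm hl)
  have hv'R : ∀ i, v' i ∈ R := by
    intro i
    rw [u4]
    exact subset_span (Set.mem_range_self i)
  have hPeq : P' = P := by
    funext i
    have d1 : P i ∣ P' i := by
      have h := hdvd i (v' i) (hv'R i) (hup' i)
      rwa [hdiag' i] at h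
    have d2 : P' i ∣ P i := by
      have h := aux_dvd P' v' u1 hdiag' hup' (w i) (by rw [← u4]; exact hwR i) i (hwup i)
      rwa [hwdiag i] at h
    exact eq_of_monic_of_associated (u1 i) (hmon i) (associated_of_dvd_dvd d2 d1)
  have hveq : ∀ i, v' i = w i := by
    intro i
    have hxmem : v' i - w i ∈ span (Polynomial k) (Set.range v') :=
      sub_mem (subset_span (Set.mem_range_self i)) (by rw [← u4]; exact hwR i)
    obtain ⟨c, hc⟩ := (mem_span_range_iff_exists_fun (Polynomial k)).mp hxmem
    have hbot : ∀ l : Fin n, (⊥ : WithBot ℕ) < (P' l).degree := by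
      intro l
      exact bot_lt_iff_ne_bot.mpr (by simp [degree_eq_bot, (u1 l).ne_zero])
    have hdegc : ∀ l : Fin n, (0 : ℕ) ≤ (l : ℕ) →
        ((∑ j, c j • v' j) l).degree < (P' l).degree := by
      intro l _
      rw [hc]
      rcases lt_trichotomy l i with hl | hl | hl
      · have e1 : (v' i - w i) l = Rm' i l - w i l := by
          show (if l = i then P' i else Rm' i l) - w i l = _
          rw [if_neg (ne_of_lt hl)]
        rw [e1]
        refine lt_of_le_of_lt (degree_sub_le _ _) (max_lt (u2 i l hl) ?_)
        rw [hPeq]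
        exact hwdeg i l (ne_of_lt hl)
      · have e1 : (v' i - w i) l = 0 := by
          rw [hl]
          show v' i i - w i i = 0
          rw [hdiag' i, hwdiag i, hPeq, sub_self]
        rw [e1, degree_zero]
        exact hbot l
      · have e1 : (v' i - w i) l = 0 := by
          show v' i l - w i l = 0
          rw [hup' i l hl, hwup i l hl, sub_self]
        rw [e1, degree_zero]
        exact hbot l
    have hc0 : ∀ l : Fin n, c l = 0 :=
      fun l => aux_coeff_zero P' v' u1 hdiag' hup' c 0 hdegc l (Nat.zero_le _)
    have hzero : v' i - w i = 0 := by
      rw [← hc]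
      exact Finset.sum_eq_zero (fun j _ => by rw [hc0 j, zero_smul])
    exact sub_eq_zero.mp hzero
  refine Prod.ext hPeq (funext fun i => funext fun j => ?_)
  by_cases hj : j < i
  · show Rm' i j = if j < i then w i j else 0
    rw [if_pos hj]
    have h := congrFun (hveq i) j
    rwa [show v' i j = Rm' i j from if_neg (ne_of_lt hj)] at h
  · show Rm' i j = if j < i then w i j else 0
    rw [if_neg hj]
    exact u3 i j hj
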